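/- A d-ary tree of height l pruned by at most r collision-removals contains at least 1 + d + d^2 + ... + d^{l−r} nodes; equivalently, if a complete d-ary tree of height l has each collision remove at most one full subtree per level, the pruned tree size is at least (d^{l−r+1} − 1)/(d − 1). -/

import Mathlib

lemma stmt11_aux (d a c : ℕ) (hd : 2 ≤ d) (h : c ≤ a) :
    d ^ (a - c) ≤ d ^ a - c := by
  have h1 : c + 1 ≤ d ^ c := by
    calc c + 1 ≤ 2 ^ c := Nat.lt_two_pow_self (n := c)
    _ ≤ d ^ c := Nat.pow_le_pow_left hd c
  have h2 : d ^ (a - c) + c ≤ d ^ (a - c) * (c + 1) := by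
    have hp : 1 ≤ d ^ (a - c) := Nat.one_le_pow _ _ (by omega)
    nlinarith
  have h3 : d ^ (a - c) * d ^ c = d ^ a := by
    rw [← pow_add]; congr 1; omega
  have h4 : d ^ (a - c) * (c + 1) ≤ d ^ a := by
    rw [← h3]; exact Nat.mul_le_mul_left _ h1
  omega

lemma stmt11_key (d l : ℕ) (hd : 2 ≤ d) (nodes coll : ℕ → ℕ)
    (hroot : nodes 0 = 1)
    (hlevel : ∀ k < l, 1 ≤ nodes (k + 1) ∧ d * nodes k - coll k ≤ nodes (k + 1)) :
    ∀ k ≤ l, d ^ (k - ∑ j ∈ Finset.range k, coll j) ≤ nodes k := by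
  intro k
  induction k with
  | zero => intro _; simp [hroot]
  | succ k ih =>
    intro hk
    have hkl : k < l := by omega
    obtain ⟨h1, h2⟩ := hlevel k hkl
    have ihk := ih (by omega)
    set C := ∑ j ∈ Finset.range k, coll j with hC
    have hsum : ∑ j ∈ Finset.range (k + 1), coll j = C + coll k := by
      rw [Finset.sum_range_succ]
    rw [hsum]
    by_cases hc : C + coll k ≥ k + 1
    · have : k + 1 - (C + coll k) = 0 := by omega
      rw [this]; simpa using h1
    · push_neg at hc
      have hCk : C ≤ k := by omega
      have hck : coll k ≤ k + 1 - C := by omega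
      have e1 : k + 1 - (C + coll k) = (k + 1 - C) - coll k := by omega
      rw [e1]
      have h5 : d ^ (k + 1 - C) - coll k ≤ nodes (k + 1) := by
        have : d ^ (k + 1 - C) ≤ d * nodes k := by
          have e2 : k + 1 - C = (k - C) + 1 := by omega
          rw [e2, pow_succ, mul_comm]
          exact Nat.mul_le_mul_left d ihk
        omega
      exact le_trans (stmt11_aux d (k + 1 - C) (coll k) hd hck) h5

/-- Size of a `d`-ary witness tree of height `l` pruned by at most `r`
collision-removals. Model: `nodes k` is the number of nodes at depth `k`
(`nodes 0 = 1` is the root); each of the `nodes k` nodes at depth `k < l` has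
`d` out-edges, of which `coll k` are collision edges (pointing to existing
nodes), so `nodes (k+1) ≥ d·(nodes k) − coll k` and `nodes (k+1) ≥ 1`; the
total number of collisions is at most `r`. Then the pruned tree has at least
`1 + d + d² + ⋯ + d^{l−r} = (d^{l−r+1} − 1)/(d − 1)` nodes. -/
theorem stmt11 (d l r : ℕ) (hd : 2 ≤ d) (nodes coll : ℕ → ℕ)
    (hroot : nodes 0 = 1)
    (hlevel : ∀ k < l, 1 ≤ nodes (k + 1) ∧ d * nodes k - coll k ≤ nodes (k + 1))
    (hcoll : ∑ k ∈ Finset.range l, coll k ≤ r) :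
    ∑ i ∈ Finset.range (l - r + 1), d ^ i ≤ ∑ k ∈ Finset.range (l + 1), nodes k := by
  have key := stmt11_key d l hd nodes coll hroot hlevel
  by_cases hrl : r ≤ l
  · have step : ∀ i ∈ Finset.range (l - r + 1), d ^ i ≤ nodes (i + r) := by
      intro i hi
      simp only [Finset.mem_range] at hi
      have hir : i + r ≤ l := by omega
      have hCle : ∑ j ∈ Finset.range (i + r), coll j ≤ r := by
        refine le_trans ?_ hcoll
        exact Finset.sum_le_sum_of_subset (Finset.range_subset_range.mpr hir)
      have := key (i + r) hir
      calc d ^ i ≤ d ^ (i + r - ∑ j ∈ Finset.range (i + r), coll j) :=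
            Nat.pow_le_pow_right (by omega) (by omega)
        _ ≤ nodes (i + r) := this
    calc ∑ i ∈ Finset.range (l - r + 1), d ^ i
        ≤ ∑ i ∈ Finset.range (l - r + 1), nodes (i + r) := Finset.sum_le_sum step
      _ = ∑ k ∈ Finset.Ico r (l + 1), nodes k := by
          rw [Finset.sum_Ico_eq_sum_range]
          have : l + 1 - r = l - r + 1 := by omega
          rw [this]
          exact Finset.sum_congr rfl (fun i _ => by rw [Nat.add_comm])
      _ ≤ ∑ k ∈ Finset.range (l + 1), nodes k := by
          refine Finset.sum_le_sum_of_subset ?_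
          intro x hx
          simp only [Finset.mem_Ico] at hx
          simp only [Finset.mem_range]; omega
  · have : l - r + 1 = 1 := by omega
    rw [this]
    simp only [Finset.sum_range_one, pow_zero]
    calc 1 = nodes 0 := hroot.symm
      _ ≤ ∑ k ∈ Finset.range (l + 1), nodes k :=
        Finset.single_le_sum (fun _ _ => Nat.zero_le _) (Finset.mem_range.mpr (by omega))
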